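/- The category of coalgebras for streams has a terminal object, namely (Stream, tail): for every relative comonad S over eq : Set → Setoid equipped with a tautological comodule morphism t : S → S, there exists a unique (up to pointwise bisimilarity) coalgebra morphism (S, t) → (Stream, tail). -/
import Mathlib


/-- A relation on streams is a bisimulation if related streams have equal heads and
related tails. -/
def IsBisim {A : Type} (R : Stream' A → Stream' A → Prop) : Prop :=
  ∀ s t, R s t → s.head = t.head ∧ R s.tail t.tail

/-- Bisimilarity of streams: the greatest bisimulation. -/
def Bisim {A : Type} (s t : Stream' A) : Prop :=
  ∃ R, IsBisim R ∧ R s t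

/-- A comonad relative to the functor `eq : Set → Setoid`, given concretely: a family
of setoids indexed by types, a counit and a cobind operation defined on setoid
morphisms, satisfying the relative comonad laws up to the setoid equalities. -/
structure RelComonadEq : Type 1 where
  T : Type → Type
  rel : ∀ {A : Type}, T A → T A → Prop
  rel_equiv : ∀ A : Type, Equivalence (@rel A)
  counit : ∀ {A : Type}, T A → A
  counit_rel : ∀ {A : Type} {x y : T A}, rel x y → counit x = counit y
  cobind : ∀ {A B : Type}, (T A → B) → T A → T B
  cobind_rel : ∀ {A B : Type} (f : T A → B), (∀ {x y : T A}, rel x y → f x = f y) →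
      ∀ {x y : T A}, rel x y → rel (cobind f x) (cobind f y)
  cobind_congr : ∀ {A B : Type} (f g : T A → B), (∀ x, f x = g x) →
      ∀ x, rel (cobind f x) (cobind g x)
  counit_cobind : ∀ {A B : Type} (f : T A → B), (∀ {x y : T A}, rel x y → f x = f y) →
      ∀ x, counit (cobind f x) = f x
  cobind_counit : ∀ {A : Type} (x : T A), rel (cobind counit x) x
  cobind_cobind : ∀ {A B C : Type} (f : T A → B) (g : T B → C),
      (∀ {x y : T A}, rel x y → f x = f y) → (∀ {x y : T B}, rel x y → g x = g y) →
      ∀ x, rel (cobind g (cobind f x)) (cobind (fun y => g (cobind f y)) x)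

/-- A morphism of tautological comodules over a relative comonad `S` (over `eq`):
a family of setoid endomorphisms commuting with the comodule operation `cobind`. -/
structure TautHom (S : RelComonadEq) : Type 1 where
  app : ∀ {A : Type}, S.T A → S.T A
  app_rel : ∀ {A : Type} {x y : S.T A}, S.rel x y → S.rel (app x) (app y)
  comm : ∀ {A B : Type} (f : S.T A → B), (∀ {x y : S.T A}, S.rel x y → f x = f y) →
      ∀ x : S.T A, S.rel (app (S.cobind f x)) (S.cobind f (app x))

/-- A morphism of stream coalgebras from `(S, t)` to `(Stream, tail)`: a morphism of
relative comonads over `eq` (with the comonad structure on streams given by `head`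
and `sredec`, and bisimilarity as setoid equality) making the comodule-morphism
square with `t` and `tail` commute. -/
structure StreamCoalgHom
    (sredec : ∀ {A B : Type}, (Stream' A → B) → Stream' A → Stream' B)
    (S : RelComonadEq) (t : TautHom S) : Type 1 where
  app : ∀ {A : Type}, S.T A → Stream' A
  app_rel : ∀ {A : Type} {x y : S.T A}, S.rel x y → Bisim (app x) (app y)
  counit_eq : ∀ {A : Type} (x : S.T A), S.counit x = (app x).head
  cobind_eq : ∀ {A B : Type} (f : Stream' A → B),
      (∀ {u v : Stream' A}, Bisim u v → f u = f v) →
      ∀ x : S.T A, Bisim (app (S.cobind (fun y => f (app y)) x)) (sredec f (app x))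
  coalg_square : ∀ {A : Type} (x : S.T A), Bisim (app (t.app x)) (app x).tail

lemma bisim_of_eq {A : Type} {s u : Stream' A} (h : s = u) : Bisim s u :=
  ⟨Eq, fun _ _ h => by subst h; exact ⟨rfl, rfl⟩, h⟩

lemma Bisim.head' {A : Type} {s u : Stream' A} (h : Bisim s u) : s.head = u.head := by
  obtain ⟨R, hR, h⟩ := h; exact (hR _ _ h).1

lemma Bisim.tail' {A : Type} {s u : Stream' A} (h : Bisim s u) : Bisim s.tail u.tail := by
  obtain ⟨R, hR, h⟩ := h; exact ⟨R, hR, (hR _ _ h).2⟩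

lemma Bisim.symm' {A : Type} {s u : Stream' A} (h : Bisim s u) : Bisim u s := by
  obtain ⟨R, hR, h⟩ := h
  exact ⟨fun a b => R b a, fun a b hab => ⟨(hR _ _ hab).1.symm, (hR _ _ hab).2⟩, h⟩

lemma Bisim.trans' {A : Type} {s u v : Stream' A} (h1 : Bisim s u) (h2 : Bisim u v) :
    Bisim s v := by
  obtain ⟨R, hR, h1⟩ := h1
  obtain ⟨Q, hQ, h2⟩ := h2
  refine ⟨fun a b => ∃ m, R a m ∧ Q m b, fun a b ⟨m, ham, hmb⟩ =>
    ⟨(hR _ _ ham).1.trans (hQ _ _ hmb).1, m.tail, (hR _ _ ham).2, (hQ _ _ hmb).2⟩,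
    u, h1, h2⟩

/-- the category of coalgebras for streams has a terminal object,
namely `(Stream, tail)`: for every relative comonad `S` over `eq : Set → Setoid`
equipped with a morphism `t` of tautological comodules over `S`, there is a coalgebra
morphism `(S, t) → (Stream, tail)`, and it is unique up to pointwise bisimilarity. -/
theorem stream_terminal
    (sredec : ∀ {A B : Type}, (Stream' A → B) → Stream' A → Stream' B)
    (hhead : ∀ {A B : Type} (f : Stream' A → B) (t : Stream' A),
      (sredec f t).head = f t)
    (htail : ∀ {A B : Type} (f : Stream' A → B) (t : Stream' A),
      (sredec f t).tail = sredec f t.tail)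
    (S : RelComonadEq) (t : TautHom S) :
    Nonempty (StreamCoalgHom @sredec S t) ∧
    ∀ (τ τ' : StreamCoalgHom @sredec S t) (A : Type) (x : S.T A),
      Bisim (τ.app x) (τ'.app x) := by
  -- the canonical map
  let ψ : ∀ {A : Type}, S.T A → Stream' A := fun {A} x n => S.counit (t.app^[n] x)
  have ψrel : ∀ {A : Type} {x y : S.T A}, S.rel x y → ψ x = ψ y := by
    intro A x y h
    funext n
    induction n generalizing x y with
    | zero => exact S.counit_rel h
    | succ n ih =>
      show S.counit (t.app^[n+1] x) = S.counit (t.app^[n+1] y)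
      rw [Function.iterate_succ_apply, Function.iterate_succ_apply]
      exact ih (t.app_rel h)
  have ψtail : ∀ {A : Type} (x : S.T A), (ψ x).tail = ψ (t.app x) := by
    intro A x
    funext n
    show S.counit (t.app^[n+1] x) = S.counit (t.app^[n] (t.app x))
    rw [Function.iterate_succ_apply]
  have hcq : ∀ {A : Type} (x : S.T A), Bisim (ψ (t.app x)) (ψ x).tail :=
    fun x => bisim_of_eq (ψtail x).symm
  constructor
  · refine ⟨⟨fun {A} x => ψ x, fun h => bisim_of_eq (ψrel h), fun x => rfl, ?_, hcq⟩⟩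
    intro A B f hf x
    set g : S.T A → B := fun y => f (ψ y) with hg
    have hgrel : ∀ {x y : S.T A}, S.rel x y → g x = g y := by
      intro x y h; simp only [hg]; rw [ψrel h]
    refine ⟨fun s u => ∃ x, s = ψ (S.cobind g x) ∧ u = sredec f (ψ x), ?_, x, rfl, rfl⟩
    rintro s u ⟨x, rfl, rfl⟩
    constructor
    · show S.counit (S.cobind g x) = (sredec f (ψ x)).head
      rw [hhead, S.counit_cobind g hgrel]
    · refine ⟨t.app x, ?_, ?_⟩
      · rw [ψtail]
        exact ψrel (t.comm g hgrel x)
      · rw [htail, ψtail]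
  · intro τ τ' A x
    refine ⟨fun s u => ∃ x, Bisim s (τ.app x) ∧ Bisim u (τ'.app x), ?_, x,
      bisim_of_eq rfl, bisim_of_eq rfl⟩
    rintro s u ⟨x, hs, hu⟩
    constructor
    · rw [hs.head', hu.head', ← τ.counit_eq, ← τ'.counit_eq]
    · exact ⟨t.app x, hs.tail'.trans' (τ.coalg_square x).symm',
        hu.tail'.trans' (τ'.coalg_square x).symm'⟩
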